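/- Let G and H be Latin square graphs of Latin squares of the same order α ≥ 6, so each has n = α² vertices. Then G and H are not isomorphic if and only if every bijection π : V(G) → V(H) satisfies MMC(π) ≥ √n − 5 = α − 5. -/

import Mathlib

open SimpleGraph

section MismatchDefs

variable {V W : Type*}

/-- The mismatch graph `G^π − H`: the symmetric difference of the image of `G` under the
bijection `π` with `H`, as a graph on `V(H)`. Its edges are the positive edges
(edges of `G^π` not in `H`) together with the negative edges (edges of `H` not in `G^π`). -/
def mismatchGraph (G : SimpleGraph V) (H : SimpleGraph W) (π : V ≃ W) : SimpleGraph W :=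
  symmDiff (G.map π.toEmbedding) H

/-- The degree of a vertex in the mismatch graph `G^π − H`. -/
noncomputable def mismatchDeg (G : SimpleGraph V) (H : SimpleGraph W) (π : V ≃ W) (x : W) : ℕ :=
  ((mismatchGraph G H π).neighborSet x).ncard

/-- The number of positive edges of `G^π − H` incident to `x`. -/
noncomputable def posDeg (G : SimpleGraph V) (H : SimpleGraph W) (π : V ≃ W) (x : W) : ℕ :=
  ((G.map π.toEmbedding).neighborSet x \ H.neighborSet x).ncard

/-- The number of negative edges of `G^π − H` incident to `x`. -/
noncomputable def negDeg (G : SimpleGraph V) (H : SimpleGraph W) (π : V ≃ W) (x : W) : ℕ :=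
  (H.neighborSet x \ (G.map π.toEmbedding).neighborSet x).ncard

/-- The maximum mismatch count `MMC(π)`: the maximum degree of the mismatch graph `G^π − H`. -/
noncomputable def MMC [Fintype W] (G : SimpleGraph V) (H : SimpleGraph W) (π : V ≃ W) : ℕ :=
  Finset.univ.sup (mismatchDeg G H π)

/-- The edit mismatch norm `μ_edit(G^π, H)`: the number of edges of the mismatch graph. -/
noncomputable def muEdit (G : SimpleGraph V) (H : SimpleGraph W) (π : V ≃ W) : ℕ :=
  (mismatchGraph G H π).edgeSet.ncard

/-- The edit distance `δ_edit(G, H)`: the minimum of `μ_edit(G^π, H)` over all bijections. -/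
noncomputable def deltaEdit (G : SimpleGraph V) (H : SimpleGraph W) : ℕ :=
  ⨅ π : V ≃ W, muEdit G H π

open Classical in
/-- The signed adjacency matrix of the mismatch graph `G^π − H`:
`+1` on positive edges, `−1` on negative edges, `0` otherwise. -/
noncomputable def signedAdj (G : SimpleGraph V) (H : SimpleGraph W) (π : V ≃ W) :
    Matrix W W ℝ := fun x y =>
  if (G.map π.toEmbedding).Adj x y ∧ ¬ H.Adj x y then 1
  else if H.Adj x y ∧ ¬ (G.map π.toEmbedding).Adj x y then -1 else 0

/-- The `ℓ_p` norm of a vector over a finite index type. -/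
noncomputable def lpNorm [Fintype W] (p : ℝ) (x : W → ℝ) : ℝ :=
  (∑ i, |x i| ^ p) ^ p⁻¹

/-- The `ℓ_p`-operator norm of a matrix: `sup_{x ≠ 0} ‖Mx‖_p / ‖x‖_p`. -/
noncomputable def lpOpNorm [Fintype W] (p : ℝ) (M : Matrix W W ℝ) : ℝ :=
  ⨆ x : {x : W → ℝ // x ≠ 0}, lpNorm p (M.mulVec x.1) / lpNorm p x.1

end MismatchDefs

/-- `L` is a Latin square: each symbol occurs exactly once in each row and each column. -/
def IsLatinSquare {A : Type*} (L : A → A → A) : Prop :=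
  (∀ a, Function.Bijective (L a)) ∧ (∀ b, Function.Bijective fun a => L a b)

/-- The Latin square graph of `L`: its vertices are the cells of the array, and two
distinct cells are adjacent iff they lie in the same row, lie in the same column, or
contain the same symbol. -/
def latinSquareGraph {A : Type*} (L : A → A → A) : SimpleGraph (A × A) :=
  SimpleGraph.fromRel (fun c d => c.1 = d.1 ∨ c.2 = d.2 ∨ L c.1 c.2 = L d.1 d.2)

set_option linter.unusedSectionVars false
section Statement17Aux

variable {A : Type*} [Fintype A] {L : A → A → A}

private lemma lsg_adj {c d : A × A} :
    (latinSquareGraph L).Adj c d ↔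
      c ≠ d ∧ (c.1 = d.1 ∨ c.2 = d.2 ∨ L c.1 c.2 = L d.1 d.2) := by
  simp only [latinSquareGraph, SimpleGraph.fromRel_adj]
  constructor
  · rintro ⟨h1, h2 | h2⟩
    · exact ⟨h1, h2⟩
    · rcases h2 with h | h | h
      exacts [⟨h1, Or.inl h.symm⟩, ⟨h1, Or.inr (Or.inl h.symm)⟩, ⟨h1, Or.inr (Or.inr h.symm)⟩]
  · rintro ⟨h1, h2⟩
    exact ⟨h1, Or.inl h2⟩

private lemma ncard_le_one_of_subsingleton {X : Type*} {s : Set X} (h : s.Subsingleton) :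
    s.ncard ≤ 1 := by
  rcases h.eq_empty_or_singleton with rfl | ⟨x, rfl⟩ <;> simp

private lemma card_le_ncard_of_inj {T : Set (A × A)} (f : A → A × A)
    (hinj : Function.Injective f) (hmem : ∀ a, f a ∈ T) :
    Fintype.card A ≤ T.ncard := by
  have hsub : Set.range f ⊆ T := by rintro _ ⟨a, rfl⟩; exact hmem a
  calc Fintype.card A = (Set.range f).ncard := by
        rw [← Set.image_univ, Set.ncard_image_of_injective _ hinj, Set.ncard_univ,
          Nat.card_eq_fintype_card]
    _ ≤ T.ncard := Set.ncard_le_ncard hsub (Set.toFinite T)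

private lemma lsg_degree (hL : IsLatinSquare L) (c : A × A) :
    ((latinSquareGraph L).neighborSet c).ncard = 3 * (Fintype.card A - 1) := by
  classical
  set g : A → A := fun a => Function.surjInv (hL.1 a).2 (L c.1 c.2) with hg
  have hgs : ∀ a, L a (g a) = L c.1 c.2 := fun a => Function.surjInv_eq (hL.1 a).2 _
  set R : Set (A × A) := (fun b => (c.1, b)) '' ({c.2}ᶜ) with hR
  set C : Set (A × A) := (fun a => (a, c.2)) '' ({c.1}ᶜ) with hC
  set S : Set (A × A) := (Set.range fun a => (a, g a)) \ {c} with hS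
  have hNeq : (latinSquareGraph L).neighborSet c = (R ∪ C) ∪ S := by
    ext z
    simp only [SimpleGraph.mem_neighborSet, lsg_adj, Set.mem_union, hR, hC, hS,
      Set.mem_image, Set.mem_compl_iff, Set.mem_singleton_iff, Set.mem_diff, Set.mem_range]
    constructor
    · rintro ⟨hne, hadj⟩
      by_cases h1 : z.1 = c.1
      · by_cases h2 : z.2 = c.2
        · exact absurd (Prod.ext_iff.mpr ⟨h1, h2⟩).symm hne
        · exact Or.inl (Or.inl ⟨z.2, h2, Prod.ext_iff.mpr ⟨h1.symm, rfl⟩⟩)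
      · by_cases h2 : z.2 = c.2
        · exact Or.inl (Or.inr ⟨z.1, h1, Prod.ext_iff.mpr ⟨rfl, h2.symm⟩⟩)
        · have hsym : L c.1 c.2 = L z.1 z.2 := by
            rcases hadj with h | h | h
            · exact absurd h.symm h1
            · exact absurd h.symm h2
            · exact h
          refine Or.inr ⟨⟨z.1, ?_⟩, fun hzc => hne hzc.symm⟩
          have h5 : L z.1 (g z.1) = L z.1 z.2 := by rw [hgs, hsym]
          exact Prod.ext_iff.mpr ⟨rfl, (hL.1 z.1).1 h5⟩
    · rintro ((⟨b, hb, rfl⟩ | ⟨a, ha, rfl⟩) | ⟨⟨a, rfl⟩, hzc⟩)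
      · exact ⟨fun h => hb (congrArg Prod.snd h).symm, Or.inl rfl⟩
      · exact ⟨fun h => ha (congrArg Prod.fst h).symm, Or.inr (Or.inl rfl)⟩
      · exact ⟨fun h => hzc h.symm, Or.inr (Or.inr (hgs a).symm)⟩
  have hdRC : Disjoint R C := by
    rw [Set.disjoint_left]
    rintro _ ⟨b, hb, rfl⟩ ⟨a, ha, hh⟩
    exact hb (congrArg Prod.snd hh).symm
  have hdRCS : Disjoint (R ∪ C) S := by
    rw [Set.disjoint_left]
    rintro z (⟨b, hb, rfl⟩ | ⟨a, ha, rfl⟩) ⟨⟨a', ha'⟩, hzc⟩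
    · have e1 : a' = c.1 := congrArg Prod.fst ha'
      have e2 : g a' = b := congrArg Prod.snd ha'
      have e3 := hgs a'
      rw [e2, e1] at e3
      exact hb ((hL.1 c.1).1 e3)
    · have e1 : a' = a := congrArg Prod.fst ha'
      have e2 : g a' = c.2 := congrArg Prod.snd ha'
      have e3 := hgs a'
      rw [e2, e1] at e3
      exact ha ((hL.2 c.2).1 e3)
  have hcR : R.ncard = Fintype.card A - 1 := by
    rw [hR, Set.ncard_image_of_injective _ (fun b b' h => congrArg Prod.snd h),
      Set.compl_eq_univ_diff, Set.ncard_diff (Set.subset_univ _), Set.ncard_univ,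
      Set.ncard_singleton, Nat.card_eq_fintype_card]
  have hcC : C.ncard = Fintype.card A - 1 := by
    rw [hC, Set.ncard_image_of_injective _ (fun b b' h => congrArg Prod.fst h),
      Set.compl_eq_univ_diff, Set.ncard_diff (Set.subset_univ _), Set.ncard_univ,
      Set.ncard_singleton, Nat.card_eq_fintype_card]
  have hcmem : c ∈ Set.range fun a => (a, g a) := by
    refine ⟨c.1, ?_⟩
    have h5 : L c.1 (g c.1) = L c.1 c.2 := hgs c.1
    exact Prod.ext_iff.mpr ⟨rfl, (hL.1 c.1).1 h5⟩
  have hcS : S.ncard = Fintype.card A - 1 := by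
    rw [hS, Set.ncard_diff (Set.singleton_subset_iff.mpr hcmem), Set.ncard_singleton,
      ← Set.image_univ, Set.ncard_image_of_injective _ (fun b b' h => congrArg Prod.fst h),
      Set.ncard_univ, Nat.card_eq_fintype_card]
  have hcard : 1 ≤ Fintype.card A := Fintype.card_pos_iff.mpr ⟨c.1⟩
  rw [hNeq, Set.ncard_union_eq hdRCS (Set.toFinite _) (Set.toFinite _),
    Set.ncard_union_eq hdRC (Set.toFinite _) (Set.toFinite _), hcR, hcC, hcS]
  omega

private lemma lsg_common_of_adj (hL : IsLatinSquare L) {c d : A × A}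
    (h : (latinSquareGraph L).Adj c d) :
    Fintype.card A ≤
      ((latinSquareGraph L).neighborSet c ∩ (latinSquareGraph L).neighborSet d).ncard := by
  classical
  obtain ⟨hne, hrel⟩ := lsg_adj.mp h
  rcases hrel with hrow | hcol | hsym
  · -- same row
    have hc2 : c.2 ≠ d.2 := fun h2 => hne (Prod.ext_iff.mpr ⟨hrow, h2⟩)
    set a₁ : A := Function.surjInv (hL.2 c.2).2 (L d.1 d.2) with ha₁
    have ha₁s : L a₁ c.2 = L d.1 d.2 := Function.surjInv_eq (hL.2 c.2).2 _
    set a₂ : A := Function.surjInv (hL.2 d.2).2 (L c.1 c.2) with ha₂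
    have ha₂s : L a₂ d.2 = L c.1 c.2 := Function.surjInv_eq (hL.2 d.2).2 _
    apply card_le_ncard_of_inj
      (fun b => if b = c.2 then (a₁, c.2) else if b = d.2 then (a₂, d.2) else (c.1, b))
    · have hsnd : ∀ b, ((fun b => if b = c.2 then (a₁, c.2) else if b = d.2 then (a₂, d.2)
          else (c.1, b)) b).2 = b := by
        intro b
        by_cases h1 : b = c.2
        · simp only [if_pos h1]; exact h1.symm
        · simp only [if_neg h1]
          by_cases h2 : b = d.2
          · simp only [if_pos h2]; exact h2.symm
          · simp only [if_neg h2]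
      intro b b' hbb
      have hx := congrArg Prod.snd hbb
      rwa [hsnd, hsnd] at hx
    · intro b
      by_cases h1 : b = c.2
      · simp only [if_pos h1]
        refine ⟨lsg_adj.mpr ⟨?_, Or.inr (Or.inl rfl)⟩,
          lsg_adj.mpr ⟨?_, Or.inr (Or.inr ha₁s.symm)⟩⟩
        · intro heq
          have h5 : c.1 = a₁ := by rw [heq]
          have h6 : L c.1 c.2 = L d.1 d.2 := by rw [h5]; exact ha₁s
          rw [hrow] at h6
          exact hc2 ((hL.1 d.1).1 h6)
        · exact fun heq => hc2 (by rw [heq])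
      · by_cases h2 : b = d.2
        · simp only [if_neg h1, if_pos h2]
          refine ⟨lsg_adj.mpr ⟨?_, Or.inr (Or.inr ha₂s.symm)⟩,
            lsg_adj.mpr ⟨?_, Or.inr (Or.inl rfl)⟩⟩
          · exact fun heq => hc2 (by rw [heq])
          · intro heq
            have h5 : d.1 = a₂ := by rw [heq]
            have h6 : L d.1 d.2 = L c.1 c.2 := by rw [h5]; exact ha₂s
            rw [hrow] at h6
            exact hc2 ((hL.1 d.1).1 h6).symm
        · simp only [if_neg h1, if_neg h2]
          refine ⟨lsg_adj.mpr ⟨?_, Or.inl rfl⟩, lsg_adj.mpr ⟨?_, Or.inl hrow.symm⟩⟩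
          · exact fun heq => h1 (by rw [heq])
          · exact fun heq => h2 (by rw [heq])
  · -- same column
    have hc1 : c.1 ≠ d.1 := fun h1 => hne (Prod.ext_iff.mpr ⟨h1, hcol⟩)
    set b₁ : A := Function.surjInv (hL.1 c.1).2 (L d.1 d.2) with hb₁
    have hb₁s : L c.1 b₁ = L d.1 d.2 := Function.surjInv_eq (hL.1 c.1).2 _
    set b₂ : A := Function.surjInv (hL.1 d.1).2 (L c.1 c.2) with hb₂
    have hb₂s : L d.1 b₂ = L c.1 c.2 := Function.surjInv_eq (hL.1 d.1).2 _
    apply card_le_ncard_of_inj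
      (fun a => if a = c.1 then (c.1, b₁) else if a = d.1 then (d.1, b₂) else (a, c.2))
    · have hfst : ∀ a, ((fun a => if a = c.1 then (c.1, b₁) else if a = d.1 then (d.1, b₂)
          else (a, c.2)) a).1 = a := by
        intro a
        by_cases h1 : a = c.1
        · simp only [if_pos h1]; exact h1.symm
        · simp only [if_neg h1]
          by_cases h2 : a = d.1
          · simp only [if_pos h2]; exact h2.symm
          · simp only [if_neg h2]
      intro a a' haa
      have hx := congrArg Prod.fst haa
      rwa [hfst, hfst] at hx
    · intro a
      by_cases h1 : a = c.1
      · simp only [if_pos h1]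
        refine ⟨lsg_adj.mpr ⟨?_, Or.inl rfl⟩,
          lsg_adj.mpr ⟨?_, Or.inr (Or.inr hb₁s.symm)⟩⟩
        · intro heq
          have h5 : c.2 = b₁ := by rw [heq]
          have h6 : L c.1 c.2 = L d.1 d.2 := by rw [h5]; exact hb₁s
          rw [hcol] at h6
          exact hc1 ((hL.2 d.2).1 h6)
        · exact fun heq => hc1 (by rw [heq])
      · by_cases h2 : a = d.1
        · simp only [if_neg h1, if_pos h2]
          refine ⟨lsg_adj.mpr ⟨?_, Or.inr (Or.inr hb₂s.symm)⟩,
            lsg_adj.mpr ⟨?_, Or.inl rfl⟩⟩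
          · exact fun heq => hc1 (by rw [heq])
          · intro heq
            have h5 : d.2 = b₂ := by rw [heq]
            have h6 : L d.1 d.2 = L c.1 c.2 := by rw [h5]; exact hb₂s
            rw [hcol] at h6
            exact hc1 ((hL.2 d.2).1 h6).symm
        · simp only [if_neg h1, if_neg h2]
          refine ⟨lsg_adj.mpr ⟨?_, Or.inr (Or.inl rfl)⟩,
            lsg_adj.mpr ⟨?_, Or.inr (Or.inl hcol.symm)⟩⟩
          · exact fun heq => h1 (by rw [heq])
          · exact fun heq => h2 (by rw [heq])
  · -- same symbol
    have hc1 : c.1 ≠ d.1 := by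
      intro h1
      have h2 := hsym
      rw [← h1] at h2
      exact hne (Prod.ext_iff.mpr ⟨h1, (hL.1 c.1).1 h2⟩)
    have hc2 : c.2 ≠ d.2 := by
      intro h2
      have h3 := hsym
      rw [← h2] at h3
      exact hne (Prod.ext_iff.mpr ⟨(hL.2 c.2).1 h3, h2⟩)
    set g : A → A := fun a => Function.surjInv (hL.1 a).2 (L c.1 c.2) with hg
    have hgs : ∀ a, L a (g a) = L c.1 c.2 := fun a => Function.surjInv_eq (hL.1 a).2 _
    apply card_le_ncard_of_inj
      (fun a => if a = c.1 then (c.1, d.2) else if a = d.1 then (d.1, c.2) else (a, g a))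
    · have hfst : ∀ a, ((fun a => if a = c.1 then (c.1, d.2) else if a = d.1 then (d.1, c.2)
          else (a, g a)) a).1 = a := by
        intro a
        by_cases h1 : a = c.1
        · simp only [if_pos h1]; exact h1.symm
        · simp only [if_neg h1]
          by_cases h2 : a = d.1
          · simp only [if_pos h2]; exact h2.symm
          · simp only [if_neg h2]
      intro a a' haa
      have hx := congrArg Prod.fst haa
      rwa [hfst, hfst] at hx
    · intro a
      by_cases h1 : a = c.1
      · simp only [if_pos h1]
        refine ⟨lsg_adj.mpr ⟨?_, Or.inl rfl⟩, lsg_adj.mpr ⟨?_, Or.inr (Or.inl rfl)⟩⟩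
        · exact fun heq => hc2 (by rw [heq])
        · exact fun heq => hc1 (by rw [heq])
      · by_cases h2 : a = d.1
        · simp only [if_neg h1, if_pos h2]
          refine ⟨lsg_adj.mpr ⟨?_, Or.inr (Or.inl rfl)⟩, lsg_adj.mpr ⟨?_, Or.inl rfl⟩⟩
          · exact fun heq => hc1 (by rw [heq])
          · exact fun heq => hc2 (by rw [heq])
        · simp only [if_neg h1, if_neg h2]
          refine ⟨lsg_adj.mpr ⟨?_, Or.inr (Or.inr (hgs a).symm)⟩,
            lsg_adj.mpr ⟨?_, Or.inr (Or.inr (hsym.symm.trans (hgs a).symm))⟩⟩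
          · exact fun heq => h1 (by rw [heq])
          · exact fun heq => h2 (by rw [heq])

private lemma lsg_common_of_nonadj (hL : IsLatinSquare L) {c d : A × A}
    (hne : c ≠ d) (hna : ¬ (latinSquareGraph L).Adj c d) :
    ((latinSquareGraph L).neighborSet c ∩ (latinSquareGraph L).neighborSet d).ncard ≤ 6 := by
  have hor : ¬(c.1 = d.1 ∨ c.2 = d.2 ∨ L c.1 c.2 = L d.1 d.2) :=
    fun ho => hna (lsg_adj.mpr ⟨hne, ho⟩)
  push_neg at hor
  obtain ⟨h1, h2, h3⟩ := hor
  set u1 : Set (A × A) := {z | c.1 = z.1 ∧ d.2 = z.2} with hu1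
  set u2 : Set (A × A) := {z | c.1 = z.1 ∧ L d.1 d.2 = L z.1 z.2} with hu2
  set u3 : Set (A × A) := {z | c.2 = z.2 ∧ d.1 = z.1} with hu3
  set u4 : Set (A × A) := {z | c.2 = z.2 ∧ L d.1 d.2 = L z.1 z.2} with hu4
  set u5 : Set (A × A) := {z | L c.1 c.2 = L z.1 z.2 ∧ d.1 = z.1} with hu5
  set u6 : Set (A × A) := {z | L c.1 c.2 = L z.1 z.2 ∧ d.2 = z.2} with hu6
  have hsub : (latinSquareGraph L).neighborSet c ∩ (latinSquareGraph L).neighborSet d ⊆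
      u1 ∪ u2 ∪ u3 ∪ u4 ∪ u5 ∪ u6 := by
    rintro z ⟨hzc, hzd⟩
    obtain ⟨hnec, hc⟩ := lsg_adj.mp hzc
    obtain ⟨hned, hd⟩ := lsg_adj.mp hzd
    simp only [Set.mem_union, hu1, hu2, hu3, hu4, hu5, hu6, Set.mem_setOf_eq]
    rcases hc with hca | hca | hca <;> rcases hd with hda | hda | hda
    · exact absurd (hca.trans hda.symm) h1
    · tauto
    · tauto
    · tauto
    · exact absurd (hca.trans hda.symm) h2
    · tauto
    · tauto
    · tauto
    · exact absurd (hca.trans hda.symm) h3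
  have b1 : u1.ncard ≤ 1 := ncard_le_one_of_subsingleton (by
    rintro z ⟨e1, e2⟩ z' ⟨e1', e2'⟩
    exact Prod.ext_iff.mpr ⟨e1.symm.trans e1', e2.symm.trans e2'⟩)
  have b2 : u2.ncard ≤ 1 := ncard_le_one_of_subsingleton (by
    rintro z ⟨e1, e2⟩ z' ⟨e1', e2'⟩
    rw [← e1] at e2
    rw [← e1'] at e2'
    exact Prod.ext_iff.mpr ⟨e1.symm.trans e1', (hL.1 c.1).1 (e2.symm.trans e2')⟩)
  have b3 : u3.ncard ≤ 1 := ncard_le_one_of_subsingleton (by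
    rintro z ⟨e1, e2⟩ z' ⟨e1', e2'⟩
    exact Prod.ext_iff.mpr ⟨e2.symm.trans e2', e1.symm.trans e1'⟩)
  have b4 : u4.ncard ≤ 1 := ncard_le_one_of_subsingleton (by
    rintro z ⟨e1, e2⟩ z' ⟨e1', e2'⟩
    rw [← e1] at e2
    rw [← e1'] at e2'
    exact Prod.ext_iff.mpr ⟨(hL.2 c.2).1 (e2.symm.trans e2'), e1.symm.trans e1'⟩)
  have b5 : u5.ncard ≤ 1 := ncard_le_one_of_subsingleton (by
    rintro z ⟨e1, e2⟩ z' ⟨e1', e2'⟩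
    rw [← e2] at e1
    rw [← e2'] at e1'
    exact Prod.ext_iff.mpr ⟨e2.symm.trans e2', (hL.1 d.1).1 (e1.symm.trans e1')⟩)
  have b6 : u6.ncard ≤ 1 := ncard_le_one_of_subsingleton (by
    rintro z ⟨e1, e2⟩ z' ⟨e1', e2'⟩
    rw [← e2] at e1
    rw [← e2'] at e1'
    exact Prod.ext_iff.mpr ⟨(hL.2 d.2).1 (e1.symm.trans e1'), e2.symm.trans e2'⟩)
  have h12 : (u1 ∪ u2).ncard ≤ 2 := le_trans (Set.ncard_union_le _ _) (by omega)
  have h123 : (u1 ∪ u2 ∪ u3).ncard ≤ 3 := le_trans (Set.ncard_union_le _ _) (by omega)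
  have h1234 : (u1 ∪ u2 ∪ u3 ∪ u4).ncard ≤ 4 := le_trans (Set.ncard_union_le _ _) (by omega)
  have h12345 : (u1 ∪ u2 ∪ u3 ∪ u4 ∪ u5).ncard ≤ 5 :=
    le_trans (Set.ncard_union_le _ _) (by omega)
  have h123456 : (u1 ∪ u2 ∪ u3 ∪ u4 ∪ u5 ∪ u6).ncard ≤ 6 :=
    le_trans (Set.ncard_union_le _ _) (by omega)
  exact le_trans (Set.ncard_le_ncard hsub (Set.toFinite _)) h123456

private lemma core_mismatch {W : Type*} [Fintype W] {X Y : SimpleGraph W} {α k : ℕ}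
    (hα : 6 ≤ α)
    (hdegX : ∀ w, (X.neighborSet w).ncard = k)
    (hdegY : ∀ w, (Y.neighborSet w).ncard = k)
    (hlam : ∀ ⦃x y : W⦄, X.Adj x y → α ≤ (X.neighborSet x ∩ X.neighborSet y).ncard)
    (hmu : ∀ ⦃x y : W⦄, x ≠ y → ¬ Y.Adj x y → (Y.neighborSet x ∩ Y.neighborSet y).ncard ≤ 6)
    (hsmall : ∀ w, (X.neighborSet w \ Y.neighborSet w).ncard
        + (Y.neighborSet w \ X.neighborSet w).ncard ≤ α - 6) :
    ∀ ⦃x y : W⦄, X.Adj x y → Y.Adj x y := by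
  intro x y hxy
  by_contra hny
  have hdisj : ∀ s t : Set W, Disjoint (s \ t) (s ∩ t) := by
    intro s t
    rw [Set.disjoint_left]
    rintro z ⟨_, hzt⟩ ⟨_, hzt'⟩
    exact hzt hzt'
  have hdiffeq : ∀ w, (X.neighborSet w \ Y.neighborSet w).ncard
      = (Y.neighborSet w \ X.neighborSet w).ncard := by
    intro w
    have e1 : (X.neighborSet w \ Y.neighborSet w).ncard
        + (X.neighborSet w ∩ Y.neighborSet w).ncard = k := by
      rw [← Set.ncard_union_eq (hdisj _ _) (Set.toFinite _) (Set.toFinite _),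
        Set.diff_union_inter, hdegX]
    have e2 : (Y.neighborSet w \ X.neighborSet w).ncard
        + (Y.neighborSet w ∩ X.neighborSet w).ncard = k := by
      rw [← Set.ncard_union_eq (hdisj _ _) (Set.toFinite _) (Set.toFinite _),
        Set.diff_union_inter, hdegY]
    rw [Set.inter_comm] at e2
    omega
  have hyP : y ∈ X.neighborSet x \ Y.neighborSet x := ⟨hxy, fun hh => hny hh⟩
  have hxQ : x ∈ X.neighborSet y \ Y.neighborSet y := ⟨hxy.symm, fun hh => hny hh.symm⟩
  have hsub : X.neighborSet x ∩ X.neighborSet y ⊆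
      (Y.neighborSet x ∩ Y.neighborSet y)
        ∪ ((X.neighborSet x \ Y.neighborSet x) \ {y})
        ∪ ((X.neighborSet y \ Y.neighborSet y) \ {x}) := by
    rintro z ⟨hzx, hzy⟩
    by_cases hy1 : z ∈ Y.neighborSet x
    · by_cases hy2 : z ∈ Y.neighborSet y
      · exact Or.inl (Or.inl ⟨hy1, hy2⟩)
      · have hzne : z ≠ x := SimpleGraph.Adj.ne' hzx
        exact Or.inr ⟨⟨hzy, hy2⟩, hzne⟩
    · have hzne : z ≠ y := SimpleGraph.Adj.ne' hzy
      exact Or.inl (Or.inr ⟨⟨hzx, hy1⟩, hzne⟩)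
  have hc1 : (X.neighborSet x ∩ X.neighborSet y).ncard ≤
      (Y.neighborSet x ∩ Y.neighborSet y).ncard
      + ((X.neighborSet x \ Y.neighborSet x) \ {y}).ncard
      + ((X.neighborSet y \ Y.neighborSet y) \ {x}).ncard := by
    refine le_trans (Set.ncard_le_ncard hsub (Set.toFinite _)) ?_
    refine le_trans (Set.ncard_union_le _ _) ?_
    exact Nat.add_le_add_right (Set.ncard_union_le _ _) _
  have hM := hmu hxy.ne hny
  have hΛ := hlam hxy
  have hP : ((X.neighborSet x \ Y.neighborSet x) \ {y}).ncard + 1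
      = (X.neighborSet x \ Y.neighborSet x).ncard :=
    Set.ncard_diff_singleton_add_one hyP (Set.toFinite _)
  have hQ : ((X.neighborSet y \ Y.neighborSet y) \ {x}).ncard + 1
      = (X.neighborSet y \ Y.neighborSet y).ncard :=
    Set.ncard_diff_singleton_add_one hxQ (Set.toFinite _)
  have hx' := hsmall x
  have hy' := hsmall y
  have hdx := hdiffeq x
  have hdy := hdiffeq y
  omega

private lemma map_neighborSet' {V W : Type*} (G : SimpleGraph V) (e : V ≃ W) (x : W) :
    (G.map e.toEmbedding).neighborSet x = e '' G.neighborSet (e.symm x) := by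
  ext z
  simp only [SimpleGraph.mem_neighborSet, SimpleGraph.map_adj, Equiv.coe_toEmbedding,
    Set.mem_image]
  constructor
  · rintro ⟨-, a, b, hab, ha, rfl⟩
    refine ⟨b, ?_, rfl⟩
    have h5 : e.symm x = a := by rw [← ha, Equiv.symm_apply_apply]
    rw [h5]
    exact hab
  · rintro ⟨b, hb, rfl⟩
    exact ⟨fun h => hb.ne (by rw [h, Equiv.symm_apply_apply]), e.symm x, b, hb, e.apply_symm_apply x, rfl⟩

end Statement17Aux

/-- Let `G` and `H` be Latin square graphs of Latin squares of the same
order `α ≥ 6` (so each has `n = α²` vertices). Then `G` and `H` are not isomorphic if and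
only if every bijection `π` satisfies `MMC(π) ≥ √n − 5 = α − 5`. -/
theorem statement_17 {A B : Type*} [Fintype A] [Fintype B]
    (α : ℕ) (hα : 6 ≤ α) (hcA : Fintype.card A = α) (hcB : Fintype.card B = α)
    (L₁ : A → A → A) (L₂ : B → B → B)
    (hL₁ : IsLatinSquare L₁) (hL₂ : IsLatinSquare L₂) :
    (¬ Nonempty (latinSquareGraph L₁ ≃g latinSquareGraph L₂)) ↔
      ∀ π : (A × A) ≃ (B × B),
        α - 5 ≤ MMC (latinSquareGraph L₁) (latinSquareGraph L₂) π := by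
  classical
  constructor
  · intro hniso π
    by_contra hlt
    push_neg at hlt
    have hb : ∀ w, mismatchDeg (latinSquareGraph L₁) (latinSquareGraph L₂) π w ≤ α - 6 := by
      intro w
      have h1 : mismatchDeg (latinSquareGraph L₁) (latinSquareGraph L₂) π w
          ≤ MMC (latinSquareGraph L₁) (latinSquareGraph L₂) π :=
        Finset.le_sup (Finset.mem_univ w)
      omega
    have hNX : ∀ w, ((latinSquareGraph L₁).map π.toEmbedding).neighborSet w
        = π '' (latinSquareGraph L₁).neighborSet (π.symm w) :=
      fun w => map_neighborSet' _ π w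
    have hinter : ∀ x y : B × B,
        (((latinSquareGraph L₁).map π.toEmbedding).neighborSet x
          ∩ ((latinSquareGraph L₁).map π.toEmbedding).neighborSet y).ncard
        = ((latinSquareGraph L₁).neighborSet (π.symm x)
          ∩ (latinSquareGraph L₁).neighborSet (π.symm y)).ncard := by
      intro x y
      rw [hNX, hNX, ← Set.image_inter π.injective, Set.ncard_image_of_injective _ π.injective]
    have hdegX : ∀ w, (((latinSquareGraph L₁).map π.toEmbedding).neighborSet w).ncard
        = 3 * (α - 1) := by
      intro w
      rw [hNX w, Set.ncard_image_of_injective _ π.injective, lsg_degree hL₁, hcA]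
    have hdegY : ∀ w, ((latinSquareGraph L₂).neighborSet w).ncard = 3 * (α - 1) := by
      intro w
      rw [lsg_degree hL₂, hcB]
    have hadj_symm : ∀ x y : B × B, ((latinSquareGraph L₁).map π.toEmbedding).Adj x y
        ↔ (latinSquareGraph L₁).Adj (π.symm x) (π.symm y) := by
      intro x y
      rw [SimpleGraph.map_adj]
      constructor
      · rintro ⟨a, b, hab, ha, hb'⟩
        have ha' : π.symm x = a := by
          rw [← ha]
          simp
        have hb'' : π.symm y = b := by
          rw [← hb']
          simp
        rw [ha', hb'']
        exact hab
      · intro hh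
        exact ⟨π.symm x, π.symm y, hh, by simp, by simp⟩
    have hlamX : ∀ ⦃x y : B × B⦄, ((latinSquareGraph L₁).map π.toEmbedding).Adj x y →
        α ≤ (((latinSquareGraph L₁).map π.toEmbedding).neighborSet x
          ∩ ((latinSquareGraph L₁).map π.toEmbedding).neighborSet y).ncard := by
      intro x y hxy
      rw [hinter]
      have := lsg_common_of_adj hL₁ ((hadj_symm x y).mp hxy)
      rwa [hcA] at this
    have hmuX : ∀ ⦃x y : B × B⦄, x ≠ y → ¬ ((latinSquareGraph L₁).map π.toEmbedding).Adj x y →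
        (((latinSquareGraph L₁).map π.toEmbedding).neighborSet x
          ∩ ((latinSquareGraph L₁).map π.toEmbedding).neighborSet y).ncard ≤ 6 := by
      intro x y hne hnadj
      rw [hinter]
      exact lsg_common_of_nonadj hL₁ (fun hh => hne (by
          have := congrArg π hh
          simpa using this))
        (fun hh => hnadj ((hadj_symm x y).mpr hh))
    have hlamY : ∀ ⦃x y : B × B⦄, (latinSquareGraph L₂).Adj x y →
        α ≤ ((latinSquareGraph L₂).neighborSet x ∩ (latinSquareGraph L₂).neighborSet y).ncard := by
      intro x y hxy
      have := lsg_common_of_adj hL₂ hxy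
      rwa [hcB] at this
    have hmuY : ∀ ⦃x y : B × B⦄, x ≠ y → ¬ (latinSquareGraph L₂).Adj x y →
        ((latinSquareGraph L₂).neighborSet x ∩ (latinSquareGraph L₂).neighborSet y).ncard ≤ 6 :=
      fun x y hne hnadj => lsg_common_of_nonadj hL₂ hne hnadj
    have hsd : ∀ w, (((latinSquareGraph L₁).map π.toEmbedding).neighborSet w
          \ (latinSquareGraph L₂).neighborSet w).ncard
        + ((latinSquareGraph L₂).neighborSet w
          \ ((latinSquareGraph L₁).map π.toEmbedding).neighborSet w).ncard ≤ α - 6 := by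
      intro w
      have h0 : (mismatchGraph (latinSquareGraph L₁) (latinSquareGraph L₂) π).neighborSet w
          = (((latinSquareGraph L₁).map π.toEmbedding).neighborSet w
              \ (latinSquareGraph L₂).neighborSet w)
            ∪ ((latinSquareGraph L₂).neighborSet w
              \ ((latinSquareGraph L₁).map π.toEmbedding).neighborSet w) := by
        ext z
        simp only [mismatchGraph, symmDiff_def, SimpleGraph.mem_neighborSet,
          SimpleGraph.sup_adj, SimpleGraph.sdiff_adj, Set.mem_union, Set.mem_diff]
      have h1 := hb w
      rw [mismatchDeg, h0, Set.ncard_union_eq ?_ (Set.toFinite _) (Set.toFinite _)] at h1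
      · exact h1
      · rw [Set.disjoint_left]
        rintro z ⟨hz1, hz2⟩ ⟨hz3, hz4⟩
        exact hz2 hz3
    have hXY := core_mismatch hα hdegX hdegY hlamX hmuY hsd
    have hYX := core_mismatch hα hdegY hdegX hlamY hmuX
      (fun w => by rw [Nat.add_comm]; exact hsd w)
    have hEq : (latinSquareGraph L₁).map π.toEmbedding = latinSquareGraph L₂ := by
      ext x y
      exact ⟨fun hh => hXY hh, fun hh => hYX hh⟩
    apply hniso
    refine ⟨⟨π, ?_⟩⟩
    intro a b
    constructor
    · intro hh
      have h2 : ((latinSquareGraph L₁).map π.toEmbedding).Adj (π a) (π b) := by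
        rw [hEq]; exact hh
      have h3 : ((latinSquareGraph L₁).map π.toEmbedding).Adj
          (π.toEmbedding a) (π.toEmbedding b) := by simpa using h2
      exact SimpleGraph.map_adj_apply.mp h3
    · intro hh
      have h2 : ((latinSquareGraph L₁).map π.toEmbedding).Adj
          (π.toEmbedding a) (π.toEmbedding b) := SimpleGraph.map_adj_apply.mpr hh
      have h3 : ((latinSquareGraph L₁).map π.toEmbedding).Adj (π a) (π b) := by simpa using h2
      rw [hEq] at h3
      exact h3
  · rintro h ⟨φ⟩
    have hmap : (latinSquareGraph L₁).map φ.toEquiv.toEmbedding = latinSquareGraph L₂ := by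
      ext x y
      rw [SimpleGraph.map_adj]
      constructor
      · rintro ⟨a, b, hab, ha, hb⟩
        have h2 : (latinSquareGraph L₂).Adj (φ a) (φ b) := φ.map_rel_iff.mpr hab
        have ha' : φ a = x := ha
        have hb' : φ b = y := hb
        rw [ha', hb'] at h2
        exact h2
      · intro hxy
        refine ⟨φ.symm x, φ.symm y, ?_, ?_, ?_⟩
        · exact φ.symm.map_rel_iff.mpr hxy
        · simpa using φ.apply_symm_apply x
        · simpa using φ.apply_symm_apply y
    have hbot : mismatchGraph (latinSquareGraph L₁) (latinSquareGraph L₂) φ.toEquiv = ⊥ := by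
      have : (latinSquareGraph L₁).map φ.toEquiv.toEmbedding = latinSquareGraph L₂ := hmap
      ext x y
      simp only [mismatchGraph, this, symmDiff_def, SimpleGraph.sup_adj, SimpleGraph.sdiff_adj,
        SimpleGraph.bot_adj]
      tauto
    have hdeg0 : ∀ w, mismatchDeg (latinSquareGraph L₁) (latinSquareGraph L₂) φ.toEquiv w = 0 := by
      intro w
      rw [mismatchDeg, hbot]
      simp [SimpleGraph.neighborSet]
    have hM : MMC (latinSquareGraph L₁) (latinSquareGraph L₂) φ.toEquiv = 0 := by
      refine Nat.le_antisymm ?_ (Nat.zero_le _)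
      rw [MMC]
      apply Finset.sup_le
      intro w _
      exact le_of_eq (hdeg0 w)
    have h5 := h φ.toEquiv
    rw [hM] at h5
    omega
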